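/- For the positive transfer function G(s) = (k₁γ(s+μ) + k₂λα)/((s+α+σ)(s+μ)) with positive parameters, the H∞ norm (supremum of |G(iω)| over real ω) is attained at ω = 0, i.e., |G(iω)| ≤ G(0) for all real ω. -/

import Mathlib

open Complex

/-- The H∞ norm of the positive transfer function
G(s) = (k₁γ(s+μ) + k₂λα)/((s+α+σ)(s+μ)) is attained at ω = 0:
the modulus on the imaginary axis is maximized at the origin. -/
theorem sair_Hinf_norm_at_zero
    (k₁ k₂ γ lam α σ μ : ℝ)
    (hk₁ : 0 < k₁) (hk₂ : 0 < k₂) (hγ : 0 < γ) (hlam : 0 < lam)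
    (hα : 0 < α) (hσ : 0 < σ) (hμ : 0 < μ)
    (G : ℂ → ℂ)
    (hG : ∀ s : ℂ, G s = ((k₁ : ℂ) * γ * (s + μ) + (k₂ : ℂ) * lam * α) /
        ((s + α + σ) * (s + μ))) :
    ∀ ω : ℝ, ‖G (Complex.I * ω)‖ ≤ ‖G 0‖ := by
  intro ω
  rw [hG, hG]
  rw [norm_div, norm_div, norm_mul, norm_mul]
  set nω : ℂ := (k₁ : ℂ) * γ * (Complex.I * ω + μ) + (k₂ : ℂ) * lam * α with hnω
  set n0 : ℂ := (k₁ : ℂ) * γ * (0 + μ) + (k₂ : ℂ) * lam * α with hn0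
  have hdω1 : 0 < ‖Complex.I * ω + α + σ‖ := by
    rw [norm_pos_iff]
    intro h
    have := congrArg Complex.re h
    simp at this
    nlinarith
  have hdω2 : 0 < ‖Complex.I * ω + μ‖ := by
    rw [norm_pos_iff]
    intro h
    have := congrArg Complex.re h
    simp at this
    nlinarith
  have hd01 : 0 < ‖(0 : ℂ) + α + σ‖ := by
    rw [norm_pos_iff]
    intro h
    have := congrArg Complex.re h
    simp at this
    nlinarith
  have hd02 : 0 < ‖(0 : ℂ) + μ‖ := by
    rw [norm_pos_iff]
    intro h
    have := congrArg Complex.re h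
    simp at this
    nlinarith
  rw [div_le_div_iff₀ (by positivity) (by positivity)]
  have h2 : (‖nω‖ * (‖(0:ℂ) + α + σ‖ * ‖(0:ℂ) + μ‖)) ^ 2
      ≤ (‖n0‖ * (‖Complex.I * ω + α + σ‖ * ‖Complex.I * ω + μ‖)) ^ 2 := by
    simp only [mul_pow, Complex.sq_norm, Complex.normSq_apply, hnω, hn0]
    simp only [Complex.add_re, Complex.add_im, Complex.mul_re, Complex.mul_im,
      Complex.I_re, Complex.I_im, Complex.ofReal_re, Complex.ofReal_im,
      Complex.zero_re, Complex.zero_im]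
    ring_nf
    nlinarith [sq_nonneg ω, sq_nonneg (ω * ω), sq_nonneg (k₁ * γ * ω), mul_pos hk₂ hlam,
      mul_pos (mul_pos hk₂ hlam) hα, mul_pos hk₁ hγ, mul_pos (mul_pos hk₁ hγ) hμ,
      mul_pos hα hσ, sq_nonneg (α + σ), mul_pos hμ hμ,
      mul_nonneg (mul_nonneg (mul_pos (mul_pos hk₂ hlam) hα).le (mul_pos (mul_pos hk₁ hγ) hμ).le) (sq_nonneg ω),
      mul_nonneg (sq_nonneg (k₂ * lam * α)) (sq_nonneg ω),
      mul_nonneg (sq_nonneg (k₁ * γ * μ)) (sq_nonneg ω),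
      mul_nonneg (sq_nonneg (k₁ * γ)) (sq_nonneg (ω * ω))]
  have := le_of_pow_le_pow_left₀ (n := 2) two_ne_zero (by positivity) h2
  linarith
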